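/- Let E be a number field with class number one, let O_E be its ring of integers, and let σ : E → E be a field automorphism with σ∘σ = id. If I is a nonzero fractional ideal of O_E such that I · σ(I) = O_E, then there exists α ∈ E^× with I = (α · σ(α)⁻¹), the principal fractional ideal generated by α/σ(α). -/

import Mathlib

open NumberField

private lemma isRelPrime_map {R S : Type*} [CommMonoidWithZero R] [CommMonoidWithZero S]
    (f : R ≃* S) {a b : R} (h : IsRelPrime a b) : IsRelPrime (f a) (f b) := by
  intro d h1 h2
  have h1' : f.symm d ∣ a := by simpa using map_dvd f.symm h1
  have h2' : f.symm d ∣ b := by simpa using map_dvd f.symm h2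
  have := (h h1' h2').map f
  simpa using this

/-- For a number field `E` of class number one with an involutive field
automorphism `σ`, any nonzero fractional ideal `I` of `O_E` whose product
with its conjugate `σ(I)` is the unit ideal is principal, generated by
`α·σ(α)⁻¹` for some `α ∈ E^×`.  Here the conjugate ideal is encoded as a
fractional ideal `J` whose underlying set is `σ '' I`. -/
theorem class_number_one_conjugate_ideal
    (E : Type*) [Field E] [NumberField E]
    (hclass : NumberField.classNumber E = 1)
    (σ : E ≃+* E) (hσ : ∀ x, σ (σ x) = x)
    (I J : FractionalIdeal (nonZeroDivisors (𝓞 E)) E)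
    (hI : I ≠ 0)
    (hJ : ((J : Submodule (𝓞 E) E) : Set E) = ⇑σ '' ((I : Submodule (𝓞 E) E) : Set E))
    (hprod : I * J = 1) :
    ∃ α : E, α ≠ 0 ∧
      I = FractionalIdeal.spanSingleton (nonZeroDivisors (𝓞 E)) (α * (σ α)⁻¹) := by
  haveI hPID : IsPrincipalIdealRing (𝓞 E) := NumberField.classNumber_eq_one_iff.mp hclass
  -- the automorphism of 𝓞 E induced by σ
  let σ' : 𝓞 E ≃+* 𝓞 E := NumberField.RingOfIntegers.mapRingEquiv σ
  have hσ'coe : ∀ x : 𝓞 E, (algebraMap (𝓞 E) E (σ' x)) = σ (algebraMap (𝓞 E) E x) := fun x => rfl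
  -- I is principal, generated by β ≠ 0
  obtain ⟨β, hβ⟩ := (FractionalIdeal.isPrincipal_iff I).mp inferInstance
  have hβ0 : β ≠ 0 := by
    rintro rfl
    rw [FractionalIdeal.spanSingleton_zero] at hβ
    exact hI hβ
  -- J is generated by σ β
  have hJspan : J = FractionalIdeal.spanSingleton (nonZeroDivisors (𝓞 E)) (σ β) := by
    ext y
    have hyJ : y ∈ J ↔ y ∈ ⇑σ '' ((I : Submodule (𝓞 E) E) : Set E) := by
      rw [← hJ]; rfl
    rw [hyJ, hβ]
    simp only [Set.mem_image, SetLike.mem_coe, FractionalIdeal.mem_coe,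
      FractionalIdeal.mem_spanSingleton]
    constructor
    · rintro ⟨x, ⟨c, rfl⟩, rfl⟩
      exact ⟨σ' c, by simp [Algebra.smul_def, hσ'coe]⟩
    · rintro ⟨c, rfl⟩
      exact ⟨σ' c • β, ⟨σ' c, rfl⟩, by simp [Algebra.smul_def, hσ'coe, hσ]⟩
  -- β * σ β is a unit of 𝓞 E
  have hspan1 : FractionalIdeal.spanSingleton (nonZeroDivisors (𝓞 E)) (β * σ β) = 1 := by
    rw [← FractionalIdeal.spanSingleton_mul_spanSingleton, ← hβ, ← hJspan, hprod]
  obtain ⟨e, he⟩ := (FractionalIdeal.mem_one_iff _).mp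
    (hspan1 ▸ FractionalIdeal.mem_spanSingleton_self _ (β * σ β))
  obtain ⟨d, hd⟩ := (FractionalIdeal.mem_spanSingleton _).mp
    (hspan1.symm ▸ ((FractionalIdeal.mem_one_iff _).mpr ⟨1, map_one _⟩))
  have hde : d * e = 1 := by
    apply NumberField.RingOfIntegers.coe_injective
    rw [map_mul, map_one, he]
    simpa [Algebra.smul_def] using hd
  have heunit : IsUnit e := IsUnit.of_mul_eq_one (a := e) d (by rw [mul_comm] at hde; exact hde)
  -- write β as a reduced fraction a / b
  set a := IsFractionRing.num (𝓞 E) β with ha_def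
  set b := IsFractionRing.den (𝓞 E) β with hb_def
  have hrel : IsRelPrime a (b : 𝓞 E) := IsFractionRing.num_den_reduced (𝓞 E) β
  have hb0 : (b : 𝓞 E) ≠ 0 := nonZeroDivisors.coe_ne_zero b
  have hbE0 : (algebraMap (𝓞 E) E (b : 𝓞 E)) ≠ 0 := by
    simpa using hb0
  have hfrac : algebraMap (𝓞 E) E a = β * algebraMap (𝓞 E) E (b : 𝓞 E) := by
    have h := IsFractionRing.mk'_num_den' (𝓞 E) β
    rwa [div_eq_iff hbE0] at h
  -- the key equation a * σ' a = e * (b * σ' b)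
  have hkey : a * σ' a = e * ((b : 𝓞 E) * σ' (b : 𝓞 E)) := by
    apply NumberField.RingOfIntegers.coe_injective
    rw [map_mul, map_mul, map_mul, hσ'coe, hσ'coe, hfrac, map_mul σ, he]
    ring
  -- from coprimality, a and σ' b are associated
  have hrelσ : IsRelPrime (σ' a) (σ' (b : 𝓞 E)) := isRelPrime_map σ'.toMulEquiv hrel
  have hdvd1 : a ∣ σ' (b : 𝓞 E) := by
    have h1 : a ∣ (b : 𝓞 E) * (e * σ' (b : 𝓞 E)) :=
      ⟨σ' a, by rw [hkey]; ring⟩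
    have h2 := hrel.dvd_of_dvd_mul_left h1
    exact (heunit.isRelPrime_right (y := e) (x := a)).dvd_of_dvd_mul_left h2
  have hdvd2 : σ' (b : 𝓞 E) ∣ a := by
    have h1 : σ' (b : 𝓞 E) ∣ σ' a * a := by
      refine dvd_trans ⟨e * (b : 𝓞 E), ?_⟩ (dvd_refl _)
      · rw [mul_comm (σ' a) a, hkey]; ring
    exact (hrelσ.symm).dvd_of_dvd_mul_left h1
  obtain ⟨u, hu⟩ := (associated_of_dvd_dvd hdvd2 hdvd1)
  -- conclude with α = σ b
  refine ⟨algebraMap (𝓞 E) E (σ' (b : 𝓞 E)), by simpa [hσ'coe] using hbE0, ?_⟩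
  have hσα : σ (algebraMap (𝓞 E) E (σ' (b : 𝓞 E))) = algebraMap (𝓞 E) E (b : 𝓞 E) := by
    rw [hσ'coe, hσ]
  rw [hσα, hβ]
  rw [FractionalIdeal.spanSingleton_eq_spanSingleton]
  refine ⟨u⁻¹, ?_⟩
  rw [Units.smul_def, Algebra.smul_def]
  field_simp
  rw [mul_assoc, ← hfrac, ← map_mul]
  congr 1
  rw [← hu, mul_comm (σ' (b : 𝓞 E)) (u : 𝓞 E), ← mul_assoc]
  simp
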